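/- Let G be a reduced abelian group whose torsion subgroup T satisfies: G/T is divisible, each p-torsion subgroup T_p is finite, and T is strongly Hopfian. Then G is uniformly strongly Hopfian. -/

import Mathlib

/-- An abelian group is strongly Hopfian if for every endomorphism `φ`,
the ascending chain `ker φ ≤ ker φ² ≤ …` is eventually stationary. -/
def StronglyHopfian (G : Type*) [AddCommGroup G] : Prop :=
  ∀ φ : AddMonoid.End G, ∃ n : ℕ, ∀ m : ℕ, n ≤ m →
    AddMonoidHom.ker (φ ^ m : G →+ G) = AddMonoidHom.ker (φ ^ n : G →+ G)

/-- Uniformly strongly Hopfian: a single `n` works as SH-exponent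
for all endomorphisms. -/
def UniformlyStronglyHopfian (G : Type*) [AddCommGroup G] : Prop :=
  ∃ n : ℕ, ∀ φ : AddMonoid.End G,
    Set.InjOn (φ : G → G) (Set.range (φ ^ n : G →+ G))

/-- A group is reduced if it has no nonzero divisible subgroup. -/
def IsReducedGroup (G : Type*) [AddCommGroup G] : Prop :=
  ∀ H : AddSubgroup G, (∀ x ∈ H, ∀ n : ℕ, 0 < n → ∃ y ∈ H, n • y = x) → H = ⊥

namespace SP14
variable {G : Type*} [AddCommGroup G]

lemma eq_zero_of_coprime_smul {a b : ℕ} (h : Nat.Coprime a b) {x : G}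
    (ha : a • x = 0) (hb : b • x = 0) : x = 0 := by
  obtain ⟨u, v, huv⟩ := (Nat.isCoprime_iff_coprime.mpr h)
  calc x = (u * (a:ℤ) + v * (b:ℤ)) • x := by rw [huv, one_zsmul]
  _ = u • ((a:ℤ) • x) + v • ((b:ℤ) • x) := by rw [add_smul, mul_smul, mul_smul]
  _ = 0 := by rw [natCast_zsmul, natCast_zsmul, ha, hb, smul_zero, smul_zero, add_zero]

lemma pow_smul_mono {p k : ℕ} {a : G} (h : p ^ k • a = 0) (l : ℕ) (hkl : k ≤ l) :
    p ^ l • a = 0 := by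
  obtain ⟨j, rfl⟩ := Nat.exists_eq_add_of_le hkl
  rw [pow_add, mul_comm, mul_smul, h, smul_zero]

/-- The p-primary part subgroup. -/
def Tp (G : Type*) [AddCommGroup G] (p : ℕ) : AddSubgroup G where
  carrier := {x | ∃ k : ℕ, p ^ k • x = 0}
  zero_mem' := ⟨0, smul_zero _⟩
  add_mem' := by
    rintro a b ⟨k, hk⟩ ⟨l, hl⟩
    refine ⟨k + l, ?_⟩
    rw [smul_add, pow_smul_mono hk (k+l) (Nat.le_add_right _ _),
      pow_smul_mono hl (k+l) (Nat.le_add_left _ _), add_zero]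
  neg_mem' := by rintro a ⟨k, hk⟩; exact ⟨k, by rw [smul_neg, hk, neg_zero]⟩

lemma mem_Tp {p : ℕ} {x : G} : x ∈ Tp G p ↔ ∃ k : ℕ, p ^ k • x = 0 := Iff.rfl

lemma Tp_torsion {p : ℕ} (hp : p.Prime) {x : G} (hx : x ∈ Tp G p) : IsOfFinAddOrder x := by
  obtain ⟨k, hk⟩ := hx
  exact isOfFinAddOrder_iff_nsmul_eq_zero.mpr ⟨p ^ k, pow_pos hp.pos k, hk⟩

/-- order coprime to p -/
def Cop (p : ℕ) (x : G) : Prop := ∃ m : ℕ, Nat.Coprime m p ∧ m • x = 0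

lemma cop_zero (p : ℕ) : Cop p (0 : G) := ⟨1, Nat.coprime_one_left p, smul_zero 1⟩

lemma cop_sub {p : ℕ} {x y : G} (hx : Cop p x) (hy : Cop p y) : Cop p (x - y) := by
  obtain ⟨m, hm, hmx⟩ := hx
  obtain ⟨m', hm', hmy⟩ := hy
  refine ⟨m * m', Nat.Coprime.mul hm hm', ?_⟩
  rw [smul_sub, mul_smul, smul_comm m m', hmx, mul_smul, hmy, smul_zero, smul_zero, sub_zero]

lemma cop_torsion {p : ℕ} (hp : p.Prime) {x : G} (hx : Cop p x) : IsOfFinAddOrder x := by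
  obtain ⟨m, hm, hmx⟩ := hx
  have hm0 : m ≠ 0 := by
    rintro rfl
    exact hp.one_lt.ne' (Nat.coprime_zero_left p |>.mp hm)
  exact isOfFinAddOrder_iff_nsmul_eq_zero.mpr ⟨m, Nat.pos_of_ne_zero hm0, hmx⟩

lemma tp_cop_zero {p : ℕ} {x : G} (h1 : x ∈ Tp G p) (h2 : Cop p x) : x = 0 := by
  obtain ⟨k, hk⟩ := h1
  obtain ⟨m, hm, hmx⟩ := h2
  exact eq_zero_of_coprime_smul (hm.symm.pow_left k) hk hmx

lemma exists_decomp {p : ℕ} (hp : p.Prime) {x : G} (hx : IsOfFinAddOrder x) :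
    ∃ u, u ∈ Tp G p ∧ Cop p (x - u) := by
  set d := addOrderOf x with hd
  have hd0 : d ≠ 0 := (addOrderOf_pos_iff.mpr hx).ne'
  set a := p ^ d.factorization p with ha
  set m := d / a with hm
  have ham : a * m = d := Nat.ordProj_mul_ordCompl_eq_self d p
  have hcop : Nat.Coprime m p := (Nat.coprime_ordCompl hp hd0).symm
  have hdx : d • x = 0 := addOrderOf_nsmul_eq_zero x
  have hdzx : (d:ℤ) • x = 0 := by rw [natCast_zsmul, hdx]
  have hcop2 : Nat.Coprime a m := hcop.symm.pow_left _
  obtain ⟨u', v', huv⟩ := (Nat.isCoprime_iff_coprime.mpr hcop2)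
  refine ⟨(v' * (m:ℤ)) • x, ⟨d.factorization p, ?_⟩, ⟨m, hcop, ?_⟩⟩
  · rw [← natCast_zsmul, smul_smul, ← ha]
    calc ((a:ℤ) * (v' * m)) • x = v' • (((a:ℤ) * m) • x) := by
          rw [smul_smul]; ring_nf
    _ = 0 := by rw [← Nat.cast_mul, ham, hdzx, smul_zero]
  · have hxu : x - (v' * (m:ℤ)) • x = (u' * (a:ℤ)) • x := by
      rw [sub_eq_iff_eq_add]
      calc x = (1 : ℤ) • x := (one_zsmul x).symm
      _ = ((u' * a) + (v' * m)) • x := by rw [huv]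
      _ = (u' * (a:ℤ)) • x + (v' * (m:ℤ)) • x := by rw [add_smul]
    rw [hxu, ← natCast_zsmul, smul_smul]
    calc ((m:ℤ) * (u' * a)) • x = u' • (((a:ℤ) * m) • x) := by rw [smul_smul]; ring_nf
    _ = 0 := by rw [← Nat.cast_mul, ham, hdzx, smul_zero]

lemma tp_unique {p : ℕ} {x u u' : G} (hu : u ∈ Tp G p) (hu' : u' ∈ Tp G p)
    (hc : Cop p (x - u)) (hc' : Cop p (x - u')) : u = u' := by
  have h1 : u - u' ∈ Tp G p := (Tp G p).sub_mem hu hu'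
  have h2 : Cop p (u - u') := by
    have := cop_sub hc' hc
    have he : (x - u') - (x - u) = u - u' := by abel
    rwa [he] at this
  exact sub_eq_zero.mp (tp_cop_zero h1 h2)

open Classical in
/-- p-part of an element (junk value 0 if not torsion). -/
noncomputable def pPart (p : ℕ) (x : G) : G :=
  if h : p.Prime ∧ IsOfFinAddOrder x then Classical.choose (exists_decomp h.1 h.2) else 0

variable {p : ℕ}

lemma pPart_spec (hp : p.Prime) {x : G} (hx : IsOfFinAddOrder x) :
    pPart p x ∈ Tp G p ∧ Cop p (x - pPart p x) := by
  rw [pPart, dif_pos ⟨hp, hx⟩]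
  exact Classical.choose_spec (exists_decomp hp hx)

lemma pPart_mem (hp : p.Prime) {x : G} (hx : IsOfFinAddOrder x) : pPart p x ∈ Tp G p :=
  (pPart_spec hp hx).1

lemma pPart_cop (hp : p.Prime) {x : G} (hx : IsOfFinAddOrder x) : Cop p (x - pPart p x) :=
  (pPart_spec hp hx).2

lemma pPart_eq (hp : p.Prime) {x u : G} (hx : IsOfFinAddOrder x)
    (hu : u ∈ Tp G p) (hc : Cop p (x - u)) : pPart p x = u :=
  tp_unique (pPart_mem hp hx) hu (pPart_cop hp hx) hc

lemma pPart_of_mem (hp : p.Prime) {x : G} (hx : x ∈ Tp G p) : pPart p x = x :=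
  pPart_eq hp (Tp_torsion hp hx) hx (by rw [sub_self]; exact cop_zero p)

lemma pPart_of_cop (hp : p.Prime) {x : G} (hx : Cop p x) : pPart p x = 0 :=
  pPart_eq hp (cop_torsion hp hx) (Tp G p).zero_mem (by rwa [sub_zero])

lemma pPart_zero (hp : p.Prime) : pPart p (0 : G) = 0 :=
  pPart_of_cop hp (cop_zero p)

lemma pPart_add (hp : p.Prime) {x y : G} (hx : IsOfFinAddOrder x) (hy : IsOfFinAddOrder y) :
    pPart p (x + y) = pPart p x + pPart p y := by
  refine pPart_eq hp (hx.add hy) ((Tp G p).add_mem (pPart_mem hp hx) (pPart_mem hp hy)) ?_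
  have := cop_sub (pPart_cop hp hx) ((cop_sub (cop_zero p) (pPart_cop hp hy)))
  have he : x - pPart p x - (0 - (y - pPart p y)) = x + y - (pPart p x + pPart p y) := by abel
  rwa [he] at this

/-- endomorphisms (AddMonoidHoms) commute with pPart on torsion elements -/
lemma pPart_comm {H : Type*} [AddCommGroup H] (hp : p.Prime) (f : G →+ H) {x : G}
    (hx : IsOfFinAddOrder x) : pPart p (f x) = f (pPart p x) := by
  refine pPart_eq hp (f.isOfFinAddOrder hx) ?_ ?_
  · obtain ⟨k, hk⟩ := pPart_mem hp hx
    exact ⟨k, by rw [← map_nsmul, hk, map_zero]⟩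
  · obtain ⟨m, hm, hmx⟩ := pPart_cop hp hx
    exact ⟨m, hm, by rw [← map_sub, ← map_nsmul, hmx, map_zero]⟩

/-- a torsion element with zero p-part for all primes is zero -/
lemma eq_zero_of_pPart_eq_zero {x : G} (hx : IsOfFinAddOrder x)
    (h : ∀ q : ℕ, q.Prime → pPart q x = 0) : x = 0 := by
  set d := addOrderOf x with hd
  have hd0 : d ≠ 0 := (addOrderOf_pos_iff.mpr hx).ne'
  have hd1 : d = 1 := by
    by_contra hne
    set q := d.minFac with hq
    have hqp : q.Prime := Nat.minFac_prime hne
    have : Cop q x := by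
      have := h q hqp
      have hc := pPart_cop hqp hx
      rwa [this, sub_zero] at hc
    obtain ⟨m, hm, hmx⟩ := this
    have hdm : d ∣ m := addOrderOf_dvd_of_nsmul_eq_zero hmx
    have : q ∣ m := dvd_trans (Nat.minFac_dvd d) hdm
    have : ¬ (q ∣ m) := by
      rw [Nat.Prime.dvd_iff_not_coprime hqp] at this
      exact fun hh => this (hm.symm)
    exact this (dvd_trans (Nat.minFac_dvd d) hdm)
  have : (1:ℕ) • x = 0 := by rw [← hd1]; exact addOrderOf_nsmul_eq_zero x
  simpa using this

section chains
variable {A : Type*} [AddCommGroup A]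

lemma pow_end_apply (φ : AddMonoid.End A) (m : ℕ) (u : A) :
    (φ ^ (m + 1)) u = (φ ^ m) (φ u) := by
  rw [pow_succ]; rfl

lemma pow_end_apply' (φ : AddMonoid.End A) (m : ℕ) (u : A) :
    (φ ^ (m + 1)) u = φ ((φ ^ m) u) := by
  rw [pow_succ']; rfl

/-- if the kernel chain is stable at step n, it is stable at all later steps -/
lemma ker_stable (φ : AddMonoid.End A) {n : ℕ} (h : ∀ u, (φ ^ (n+1)) u = 0 → (φ ^ n) u = 0) :
    ∀ m, n ≤ m → ∀ u, (φ ^ m) u = 0 → (φ ^ n) u = 0 := by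
  intro m hm
  obtain ⟨j, rfl⟩ := Nat.exists_eq_add_of_le hm
  clear hm
  induction j with
  | zero => intro u hu; exact hu
  | succ j ih =>
    intro u hu
    have h1 : (φ ^ (n + j)) (φ u) = 0 := by
      rw [← pow_end_apply]; rw [show n + (j+1) = (n + j) + 1 from rfl] at hu; exact hu
    have h2 : (φ ^ n) (φ u) = 0 := ih _ h1
    exact h _ (by rw [pow_end_apply]; exact h2)

/-- a failure witness at step N gives failure witnesses at all earlier steps -/
lemma fail_mono (φ : AddMonoid.End A) {N : ℕ} {u : A}
    (h1 : (φ ^ (N+1)) u = 0) (h2 : (φ ^ N) u ≠ 0) {k : ℕ} (hk : k ≤ N) :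
    ∃ v, (φ ^ (k+1)) v = 0 ∧ (φ ^ k) v ≠ 0 := by
  obtain ⟨j, rfl⟩ := Nat.exists_eq_add_of_le hk
  have key : ∀ i : ℕ, (φ ^ i) ((φ ^ j) u) = (φ ^ (i + j)) u := by
    intro i; rw [pow_add]; rfl
  refine ⟨(φ ^ j) u, ?_, ?_⟩
  · rw [key, show k + 1 + j = (k + j) + 1 by ring]
    exact h1
  · rw [key]
    exact h2

/-- on a finite group, a failure witness at step N forces N + 2 ≤ card -/
lemma fail_card (φ : AddMonoid.End A) [Finite A] {N : ℕ} {u : A}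
    (h1 : (φ ^ (N+1)) u = 0) (h2 : (φ ^ N) u ≠ 0) : N + 2 ≤ Nat.card A := by
  set f : ℕ → Set A := fun k => {v | (φ ^ k) v = 0} with hf
  have hfin : ∀ k, (f k).Finite := fun k => Set.toFinite _
  have hmono : ∀ k, k ≤ N → (f k).ncard < (f (k+1)).ncard := by
    intro k hk
    obtain ⟨v, hv1, hv2⟩ := fail_mono φ h1 h2 hk
    have hss : f k ⊂ f (k + 1) := by
      constructor
      · intro w hw
        simp only [f, Set.mem_setOf_eq] at hw ⊢
        rw [pow_end_apply', hw, map_zero]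
      · intro hcon
        exact hv2 (hcon hv1)
    exact Set.ncard_lt_ncard hss (hfin _)
  have hlow : ∀ k, k ≤ N + 1 → k + 1 ≤ (f k).ncard := by
    intro k
    induction k with
    | zero =>
      intro _
      have h0 : (0:A) ∈ f 0 := by simp [f]
      have : (f 0).Nonempty := ⟨0, h0⟩
      have := Set.Nonempty.ncard_pos (hs := (hfin 0)) this
      omega
    | succ k ih =>
      intro hk
      have h1' := ih (by omega)
      have h2' := hmono k (by omega)
      omega
  have hle : (f (N+1)).ncard ≤ Nat.card A := by
    have := Set.ncard_le_ncard (Set.subset_univ (f (N+1))) Set.finite_univ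
    rwa [Set.ncard_univ] at this
  have := hlow (N+1) le_rfl
  omega

end chains

section main
variable {G : Type*} [AddCommGroup G]

lemma Tp_le_torsion (hp : p.Prime) : Tp G p ≤ AddCommGroup.torsion G := by
  intro x hx
  exact (AddCommGroup.mem_torsion x).mpr (Tp_torsion hp hx)

/-- the p-part projection as an AddMonoidHom on the torsion subgroup -/
noncomputable def pPartT (hp : p.Prime) :
    ↥(AddCommGroup.torsion G) →+ ↥(Tp G p) where
  toFun t := ⟨pPart p (t : G), pPart_mem hp t.2⟩
  map_zero' := by
    ext
    exact pPart_zero hp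
  map_add' t s := by
    ext
    exact pPart_add hp t.2 s.2

lemma pPartT_coe (hp : p.Prime) (t : ↥(AddCommGroup.torsion G)) :
    ((pPartT hp t : ↥(Tp G p)) : G) = pPart p (t : G) := rfl

/-- extend an endomorphism of the p-primary subgroup to the torsion subgroup, valued in G -/
noncomputable def embedT (hp : p.Prime) (θ : AddMonoid.End ↥(Tp G p)) :
    ↥(AddCommGroup.torsion G) →+ G :=
  ((Tp G p).subtype.comp (θ : ↥(Tp G p) →+ ↥(Tp G p))).comp (pPartT hp)

lemma embedT_apply (hp : p.Prime) (θ : AddMonoid.End ↥(Tp G p))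
    (t : ↥(AddCommGroup.torsion G)) :
    embedT hp θ t = ((θ (pPartT hp t) : ↥(Tp G p)) : G) := rfl

lemma embedT_mem (hp : p.Prime) (θ : AddMonoid.End ↥(Tp G p))
    (t : ↥(AddCommGroup.torsion G)) : embedT hp θ t ∈ Tp G p :=
  (θ (pPartT hp t)).2

lemma embedT_eq_zero_of_not_dvd (hp : p.Prime) (θ : AddMonoid.End ↥(Tp G p))
    (t : ↥(AddCommGroup.torsion G)) (h : ¬ p ∣ addOrderOf (t : G)) :
    embedT hp θ t = 0 := by
  have ht : IsOfFinAddOrder (t : G) := t.2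
  have hcop : Cop p (t : G) :=
    ⟨addOrderOf (t : G), ((Nat.Prime.coprime_iff_not_dvd hp).mpr h).symm,
      addOrderOf_nsmul_eq_zero _⟩
  have : pPartT hp t = (0 : ↥(Tp G p)) := by
    ext
    rw [pPartT_coe]
    exact pPart_of_cop hp hcop
  rw [embedT_apply, this, map_zero]
  rfl

end main

section main2
variable {G : Type*} [AddCommGroup G]

def SHopf (A : Type*) [AddCommGroup A] : Prop :=
  ∀ φ : AddMonoid.End A, ∃ n : ℕ, ∀ m : ℕ, n ≤ m →
    AddMonoidHom.ker (φ ^ m : A →+ A) = AddMonoidHom.ker (φ ^ n : A →+ A)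

lemma embedT_eq_zero_of_cop (hp : p.Prime) (θ : AddMonoid.End ↥(Tp G p))
    (t : ↥(AddCommGroup.torsion G)) (h : Cop p (t : G)) :
    embedT hp θ t = 0 := by
  have : pPartT hp t = (0 : ↥(Tp G p)) := by
    ext
    rw [pPartT_coe]
    exact pPart_of_cop hp h
  rw [embedT_apply, this, map_zero]
  rfl

lemma uniform_prime_bound
    (hfin : ∀ p : ℕ, p.Prime → {x : G | ∃ k : ℕ, p ^ k • x = 0}.Finite)
    (hT : SHopf ↥(AddCommGroup.torsion G)) :
    ∃ N : ℕ, ∀ p : ℕ, p.Prime → ∀ θ : AddMonoid.End ↥(Tp G p), ∀ u,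
      (θ ^ (N + 1)) u = 0 → (θ ^ N) u = 0 := by
  by_contra hcon
  push_neg at hcon
  have h : ∀ N : ℕ, ∃ p : ℕ, ∃ _ : p.Prime, ∃ θ : AddMonoid.End ↥(Tp G p), ∃ u,
      (θ ^ (N + 1)) u = 0 ∧ (θ ^ N) u ≠ 0 := by
    intro N
    obtain ⟨p, hp, θ, u, h1, h2⟩ := hcon N
    exact ⟨p, hp, θ, u, h1, h2⟩
  choose P hP θf uf h1f h2f using h
  -- finiteness of each primary component
  have hTpFin : ∀ (pp : ℕ), pp.Prime → Finite ↥(Tp G pp) := by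
    intro pp hpp
    have : ((Tp G pp : Set G)).Finite := hfin pp hpp
    exact this.to_subtype
  -- fibers of P are bounded
  have hfiber : ∀ pp : ℕ, pp.Prime → ∀ N, P N = pp → N < Nat.card ↥(Tp G pp) := by
    intro pp hpp N hN
    haveI := hTpFin (P N) (hP N)
    have := fail_card (θf N) (h1f N) (h2f N)
    rw [hN] at this
    omega
  -- the range of P is infinite
  have hrange : (Set.range P).Infinite := by
    intro hfin'
    have huniv : (Set.univ : Set ℕ) = ⋃ pp ∈ Set.range P, {N | P N = pp} := by
      ext N
      simp only [Set.mem_univ, Set.mem_iUnion, Set.mem_setOf_eq, true_iff]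
      exact ⟨P N, Set.mem_range_self N, rfl⟩
    have : (Set.univ : Set ℕ).Finite := by
      rw [huniv]
      refine hfin'.biUnion ?_
      rintro pp ⟨N₀, rfl⟩
      have : {N | P N = P N₀} ⊆ Set.Iio (Nat.card ↥(Tp G (P N₀))) := by
        intro N hN
        exact hfiber (P N₀) (hP N₀) N hN
      exact (Set.finite_Iio _).subset this
    exact Set.infinite_univ this
  set e := hrange.natEmbedding with he
  have hNseq : ∀ i : ℕ, ∃ N, P N = (e i : ℕ) := fun i => (e i).2
  choose Nseq hNseq' using hNseq
  have hNinj : Function.Injective Nseq := by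
    intro i j hij
    have : (e i : ℕ) = (e j : ℕ) := by rw [← hNseq' i, ← hNseq' j, hij]
    exact e.injective (Subtype.ext this)
  set q : ℕ → ℕ := fun i => P (Nseq i) with hq
  have hqprime : ∀ i, (q i).Prime := fun i => hP (Nseq i)
  have hqinj : Function.Injective q := by
    intro i j hij
    have : (e i : ℕ) = (e j : ℕ) := by rw [← hNseq' i, ← hNseq' j]; exact hij
    exact e.injective (Subtype.ext this)
  set θ' : ∀ i, AddMonoid.End ↥(Tp G (q i)) := fun i => θf (Nseq i) with hθ'
  set u' : ∀ i, ↥(Tp G (q i)) := fun i => uf (Nseq i) with hu'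
  -- support finiteness
  have hsupp : ∀ t : ↥(AddCommGroup.torsion G),
      (Function.support fun i => embedT (hqprime i) (θ' i) t).Finite := by
    intro t
    have hd0 : addOrderOf (t : G) ≠ 0 := by
      have := (addOrderOf_pos_iff.mpr t.2)
      omega
    have hsub : (Function.support fun i => embedT (hqprime i) (θ' i) t) ⊆
        q ⁻¹' {n : ℕ | n ∣ addOrderOf (t : G)} := by
      intro i hi
      simp only [Function.mem_support] at hi
      by_contra hdvd
      simp only [Set.mem_preimage, Set.mem_setOf_eq] at hdvd
      exact hi (embedT_eq_zero_of_not_dvd (hqprime i) (θ' i) t hdvd)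
    refine Set.Finite.subset (Set.Finite.preimage hqinj.injOn ?_) hsub
    refine (Set.finite_Iic (addOrderOf (t : G))).subset ?_
    intro n hn
    exact Nat.le_of_dvd (Nat.pos_of_ne_zero hd0) hn
  -- the combined endomorphism, valued in G
  set Ψ₀ : ↥(AddCommGroup.torsion G) →+ G :=
    { toFun := fun t => ∑ᶠ i, embedT (hqprime i) (θ' i) t
      map_zero' := by simp only [map_zero]; exact finsum_zero
      map_add' := by
        intro t s
        show (∑ᶠ i, embedT (hqprime i) (θ' i) (t + s)) =
          (∑ᶠ i, embedT (hqprime i) (θ' i) t) + ∑ᶠ i, embedT (hqprime i) (θ' i) s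
        have heq : (fun i => embedT (hqprime i) (θ' i) (t + s)) =
            fun i => embedT (hqprime i) (θ' i) t + embedT (hqprime i) (θ' i) s := by
          funext i; rw [map_add]
        rw [heq, finsum_add_distrib (hsupp t) (hsupp s)] } with hΨ₀
  have hΨ₀mem : ∀ t, Ψ₀ t ∈ AddCommGroup.torsion G := by
    intro t
    have : Ψ₀ t = ∑ i ∈ (hsupp t).toFinset, embedT (hqprime i) (θ' i) t :=
      finsum_eq_sum _ (hsupp t)
    rw [this]
    refine AddSubgroup.sum_mem _ ?_
    intro i _
    exact Tp_le_torsion (hqprime i) (embedT_mem (hqprime i) (θ' i) t)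
  set Ψ : AddMonoid.End ↥(AddCommGroup.torsion G) :=
    AddMonoidHom.codRestrict Ψ₀ _ hΨ₀mem with hΨ
  -- evaluation on elements of a single component
  have hPsi_incl : ∀ j (u : ↥(Tp G (q j))),
      Ψ (AddSubgroup.inclusion (Tp_le_torsion (hqprime j)) u) =
        AddSubgroup.inclusion (Tp_le_torsion (hqprime j)) (θ' j u) := by
    intro j u
    ext
    show Ψ₀ _ = _
    have hev : ∀ i, embedT (hqprime i) (θ' i)
        (AddSubgroup.inclusion (Tp_le_torsion (hqprime j)) u) =
        (if h : i = j then ((θ' j u : ↥(Tp G (q j))) : G) else 0) := by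
      intro i
      by_cases h : i = j
      · subst h
        have hpp : pPartT (hqprime i) (AddSubgroup.inclusion (Tp_le_torsion (hqprime i)) u)
            = u := by
          ext
          rw [pPartT_coe]
          exact pPart_of_mem (hqprime i) u.2
        rw [dif_pos rfl, embedT_apply, hpp]
      · rw [dif_neg h]
        refine embedT_eq_zero_of_cop (hqprime i) (θ' i) _ ?_
        obtain ⟨k, hk⟩ := u.2
        refine ⟨(q j) ^ k, ?_, ?_⟩
        · exact Nat.Coprime.pow_left k ((Nat.coprime_primes (hqprime j) (hqprime i)).mpr
            fun hh => h (hqinj hh.symm))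
        · exact hk
    show (∑ᶠ i, embedT (hqprime i) (θ' i) _) = _
    rw [show (fun i => embedT (hqprime i) (θ' i)
      (AddSubgroup.inclusion (Tp_le_torsion (hqprime j)) u)) = fun i =>
      (if h : i = j then ((θ' j u : ↥(Tp G (q j))) : G) else 0) from funext hev]
    rw [finsum_eq_single _ j (fun i hi => dif_neg hi), dif_pos rfl]
    rfl
  have hPsi_pow : ∀ (m : ℕ) (j) (u : ↥(Tp G (q j))),
      (Ψ ^ m) (AddSubgroup.inclusion (Tp_le_torsion (hqprime j)) u) =
        AddSubgroup.inclusion (Tp_le_torsion (hqprime j)) ((θ' j ^ m) u) := by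
    intro m
    induction m with
    | zero => intro j u; simp only [pow_zero]; rfl
    | succ m ih =>
      intro j u
      rw [pow_end_apply, pow_end_apply]
      rw [show Ψ (AddSubgroup.inclusion (Tp_le_torsion (hqprime j)) u) =
        AddSubgroup.inclusion (Tp_le_torsion (hqprime j)) (θ' j u) from hPsi_incl j u]
      exact ih j (θ' j u)
  -- now derive the contradiction
  obtain ⟨n₀, hn₀⟩ := hT Ψ
  have : ∃ i, n₀ ≤ Nseq i := by
    by_contra hc
    push_neg at hc
    have : Set.range Nseq ⊆ Set.Iio n₀ := by rintro _ ⟨i, rfl⟩; exact hc i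
    exact (Set.infinite_range_of_injective hNinj) ((Set.finite_Iio n₀).subset this)
  obtain ⟨i, hi⟩ := this
  set a := AddSubgroup.inclusion (Tp_le_torsion (hqprime i)) (u' i) with ha
  have hker1 : a ∈ AddMonoidHom.ker (Ψ ^ (Nseq i + 1) : _ →+ _) := by
    change (Ψ ^ (Nseq i + 1)) a = 0
    show (Ψ ^ (Nseq i + 1)) a = 0
    rw [ha, hPsi_pow]
    have : (θ' i ^ (Nseq i + 1)) (u' i) = 0 := h1f (Nseq i)
    rw [this, map_zero]
  have hker2 : a ∈ AddMonoidHom.ker (Ψ ^ (Nseq i) : _ →+ _) := by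
    rw [hn₀ (Nseq i + 1) (by omega)] at hker1
    rw [hn₀ (Nseq i) (by omega)]
    exact hker1
  change (Ψ ^ Nseq i) a = 0 at hker2
  have : (Ψ ^ Nseq i) a = 0 := hker2
  rw [ha, hPsi_pow] at this
  have hzero : (θ' i ^ Nseq i) (u' i) = 0 := by
    have := congrArg (Subtype.val) this
    exact Subtype.ext this
  exact h2f (Nseq i) hzero

end main2

section main3
variable {G : Type*} [AddCommGroup G]

/-- restriction of an endomorphism of the torsion subgroup to a primary component -/
def restrictTp (hq : p.Prime) (ψ : AddMonoid.End ↥(AddCommGroup.torsion G)) :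
    AddMonoid.End ↥(Tp G p) where
  toFun u := ⟨(ψ (AddSubgroup.inclusion (Tp_le_torsion hq) u) : G), by
    obtain ⟨k, hk⟩ := u.2
    refine ⟨k, ?_⟩
    have h1 : p ^ k • (AddSubgroup.inclusion (Tp_le_torsion hq) u) = 0 := by
      ext
      show p ^ k • (u : G) = 0
      exact hk
    calc p ^ k • ((ψ (AddSubgroup.inclusion (Tp_le_torsion hq) u) : G))
        = ((p ^ k • ψ (AddSubgroup.inclusion (Tp_le_torsion hq) u) :
            ↥(AddCommGroup.torsion G)) : G) := rfl
    _ = ((ψ (p ^ k • AddSubgroup.inclusion (Tp_le_torsion hq) u) :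
            ↥(AddCommGroup.torsion G)) : G) := by rw [map_nsmul]
    _ = 0 := by rw [h1, map_zero]; rfl⟩
  map_zero' := by
    ext
    show (ψ _ : G) = 0
    rw [show AddSubgroup.inclusion (Tp_le_torsion hq) (0 : ↥(Tp G p)) = 0 from rfl, map_zero]
    rfl
  map_add' u v := by
    ext
    show (ψ _ : G) = (ψ _ : G) + (ψ _ : G)
    rw [show AddSubgroup.inclusion (Tp_le_torsion hq) (u + v) =
      AddSubgroup.inclusion (Tp_le_torsion hq) u + AddSubgroup.inclusion (Tp_le_torsion hq) v
      from rfl, map_add]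
    rfl

lemma restrictTp_coe (hq : p.Prime) (ψ : AddMonoid.End ↥(AddCommGroup.torsion G))
    (u : ↥(Tp G p)) :
    ((restrictTp hq ψ u : ↥(Tp G p)) : G) =
      (ψ (AddSubgroup.inclusion (Tp_le_torsion hq) u) : G) := rfl

lemma pPart_psi_comm (hq : p.Prime) (ψ : AddMonoid.End ↥(AddCommGroup.torsion G))
    (s : ↥(AddCommGroup.torsion G)) :
    pPart p ((ψ s : G)) = ((restrictTp hq ψ (pPartT hq s) : ↥(Tp G p)) : G) := by
  refine pPart_eq hq (ψ s).2 (restrictTp hq ψ (pPartT hq s)).2 ?_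
  rw [restrictTp_coe]
  have hinc : AddSubgroup.inclusion (Tp_le_torsion hq) (pPartT hq s) =
      (⟨pPart p (s : G), Tp_le_torsion hq (pPart_mem hq s.2)⟩ : ↥(AddCommGroup.torsion G)) := rfl
  obtain ⟨m, hm, hms⟩ := pPart_cop hq s.2
  refine ⟨m, hm, ?_⟩
  have h1 : m • (s - AddSubgroup.inclusion (Tp_le_torsion hq) (pPartT hq s)) = 0 := by
    ext
    show m • ((s : G) - pPart p (s : G)) = 0
    exact hms
  calc m • ((ψ s : G) - (ψ (AddSubgroup.inclusion (Tp_le_torsion hq) (pPartT hq s)) : G))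
      = ((m • (ψ (s - AddSubgroup.inclusion (Tp_le_torsion hq) (pPartT hq s))) :
          ↥(AddCommGroup.torsion G)) : G) := by rw [map_sub]; rfl
  _ = ((ψ (m • (s - AddSubgroup.inclusion (Tp_le_torsion hq) (pPartT hq s))) :
          ↥(AddCommGroup.torsion G)) : G) := by rw [map_nsmul]
  _ = 0 := by rw [h1, map_zero]; rfl

lemma pPart_psi_pow (hq : p.Prime) (ψ : AddMonoid.End ↥(AddCommGroup.torsion G))
    (t : ↥(AddCommGroup.torsion G)) (m : ℕ) :
    pPart p (((ψ ^ m) t : G)) = ((((restrictTp hq ψ) ^ m) (pPartT hq t) : ↥(Tp G p)) : G) := by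
  induction m with
  | zero =>
    simp only [pow_zero]
    exact (pPartT_coe hq t).symm
  | succ m ih =>
    rw [pow_end_apply' ψ m t, pPart_psi_comm hq ψ]
    have : pPartT hq ((ψ ^ m) t) = ((restrictTp hq ψ) ^ m) (pPartT hq t) := by
      ext
      rw [pPartT_coe]
      exact ih
    rw [this, pow_end_apply']

lemma uniform_torsion_bound
    (hfin : ∀ p : ℕ, p.Prime → {x : G | ∃ k : ℕ, p ^ k • x = 0}.Finite)
    (hT : SHopf ↥(AddCommGroup.torsion G)) :
    ∃ N : ℕ, ∀ ψ : AddMonoid.End ↥(AddCommGroup.torsion G), ∀ t,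
      (ψ ^ (N + 1)) t = 0 → (ψ ^ N) t = 0 := by
  obtain ⟨N, hN⟩ := uniform_prime_bound hfin hT
  refine ⟨N, fun ψ t ht => ?_⟩
  have hcoe : ((ψ ^ N) t : G) = 0 := by
    refine eq_zero_of_pPart_eq_zero ((ψ ^ N) t).2 ?_
    intro q hq
    rw [pPart_psi_pow hq ψ t N]
    have h1 : ((restrictTp hq ψ) ^ (N + 1)) (pPartT hq t) = 0 := by
      have := pPart_psi_pow hq ψ t (N + 1)
      rw [ht, show ((0 : ↥(AddCommGroup.torsion G)) : G) = 0 from rfl, pPart_zero hq] at this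
      exact Subtype.ext this.symm
    have h2 := hN q hq (restrictTp hq ψ) (pPartT hq t) h1
    rw [h2]
    rfl
  exact Subtype.ext hcoe

end main3

section main4
variable {G : Type*} [AddCommGroup G]

lemma bounded_finite
    (hfin : ∀ p : ℕ, p.Prime → {x : G | ∃ k : ℕ, p ^ k • x = 0}.Finite) :
    ∀ n : ℕ, 0 < n → {x : G | n • x = 0}.Finite := by
  intro n
  induction n using Nat.strong_induction_on with
  | _ n ih =>
    intro hn
    rcases eq_or_ne n 1 with rfl | hne
    · refine Set.Finite.subset (Set.finite_singleton 0) ?_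
      intro x hx
      simp only [Set.mem_setOf_eq, one_smul] at hx
      simp [hx]
    · set p := n.minFac with hp
      have hpp : p.Prime := Nat.minFac_prime hne
      set a := p ^ n.factorization p with ha
      set m := n / a with hm
      have ham : a * m = n := Nat.ordProj_mul_ordCompl_eq_self n p
      have hppos : 0 < n.factorization p :=
        Nat.Prime.factorization_pos_of_dvd hpp (by omega) (Nat.minFac_dvd n)
      have hagt : 1 < a := by
        calc 1 < p := hpp.one_lt
        _ = p ^ 1 := (pow_one p).symm
        _ ≤ a := Nat.pow_le_pow_right hpp.pos hppos
      have hmpos : 0 < m := by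
        rcases Nat.eq_zero_or_pos m with h | h
        · rw [h, mul_zero] at ham; omega
        · exact h
      have hmlt : m < n := by nlinarith [ham]
      have hcop : Nat.Coprime a m := (Nat.coprime_ordCompl hpp (show n ≠ 0 by omega)).pow_left _
      obtain ⟨α, β, hαβ⟩ := Nat.isCoprime_iff_coprime.mpr hcop
      have hS1 : {y : G | a • y = 0}.Finite := by
        refine (hfin p hpp).subset ?_
        intro y hy
        exact ⟨n.factorization p, hy⟩
      have hS2 : {y : G | m • y = 0}.Finite := ih m hmlt hmpos
      set f : G → G × G := fun x => ((β * (m:ℤ)) • x, (α * (a:ℤ)) • x) with hf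
      have hrec : ∀ x ∈ {x : G | n • x = 0}, (β * (m:ℤ)) • x + (α * (a:ℤ)) • x = x := by
        intro x _
        calc (β * (m:ℤ)) • x + (α * (a:ℤ)) • x = ((α * a) + (β * m)) • x := by
              rw [add_smul]; abel
        _ = x := by rw [hαβ, one_zsmul]
      have hinj : Set.InjOn f {x : G | n • x = 0} := by
        intro x hx y hy hxy
        have h1 : (β * (m:ℤ)) • x = (β * (m:ℤ)) • y := congrArg Prod.fst hxy
        have h2 : (α * (a:ℤ)) • x = (α * (a:ℤ)) • y := congrArg Prod.snd hxy
        rw [← hrec x hx, ← hrec y hy, h1, h2]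
      have himg : f '' {x : G | n • x = 0} ⊆ {y : G | a • y = 0} ×ˢ {y : G | m • y = 0} := by
        rintro _ ⟨x, hx, rfl⟩
        simp only [Set.mem_setOf_eq] at hx
        have hnz : (n:ℤ) • x = 0 := by rw [natCast_zsmul, hx]
        constructor
        · show a • ((β * (m:ℤ)) • x) = 0
          rw [← natCast_zsmul, smul_smul]
          calc ((a:ℤ) * (β * m)) • x = β • (((a:ℤ) * (m:ℤ)) • x) := by
                rw [smul_smul]; ring_nf
          _ = 0 := by rw [← Nat.cast_mul, ham, hnz, smul_zero]
        · show m • ((α * (a:ℤ)) • x) = 0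
          rw [← natCast_zsmul, smul_smul]
          calc ((m:ℤ) * (α * a)) • x = α • (((a:ℤ) * (m:ℤ)) • x) := by
                rw [smul_smul]; ring_nf
          _ = 0 := by rw [← Nat.cast_mul, ham, hnz, smul_zero]
      exact Set.Finite.of_finite_image ((hS1.prod hS2).subset himg) hinj

/-- elements of the first Ulm subgroup vanish -/
lemma ulm_zero (hred : IsReducedGroup G)
    (hfin : ∀ p : ℕ, p.Prime → {x : G | ∃ k : ℕ, p ^ k • x = 0}.Finite)
    (x : G) (hx : ∀ n : ℕ, 0 < n → ∃ y, n • y = x) : x = 0 := by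
  set D : AddSubgroup G :=
    { carrier := {z : G | ∀ n : ℕ, 0 < n → ∃ y, n • y = z}
      zero_mem' := fun n hn => ⟨0, smul_zero n⟩
      add_mem' := by
        rintro z w hz hw n hn
        obtain ⟨y1, hy1⟩ := hz n hn
        obtain ⟨y2, hy2⟩ := hw n hn
        exact ⟨y1 + y2, by rw [smul_add, hy1, hy2]⟩
      neg_mem' := by
        rintro z hz n hn
        obtain ⟨y, hy⟩ := hz n hn
        exact ⟨-y, by rw [smul_neg, hy]⟩ } with hD
  have hdivD : ∀ z ∈ D, ∀ n : ℕ, 0 < n → ∃ y ∈ D, n • y = z := by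
    intro z hz n hn
    set A := {y : G | n • y = z} with hA
    obtain ⟨y₀, hy₀⟩ := hz n hn
    have hAfin : A.Finite := by
      have hsub : A ⊆ (fun w => y₀ + w) '' {w : G | n • w = 0} := by
        intro y hy
        refine ⟨y - y₀, ?_, by show y₀ + (y - y₀) = y; rw [add_comm, sub_add_cancel]⟩
        simp only [Set.mem_setOf_eq, smul_sub]
        rw [hy, hy₀, sub_self]
      exact Set.Finite.subset (Set.Finite.image _ (bounded_finite hfin n hn)) hsub
    by_contra hcon
    push_neg at hcon
    have hcon' : ∀ y ∈ A, ∃ c : ℕ, 0 < c ∧ ¬∃ w, c • w = y := by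
      intro y hy
      by_contra hy2
      push_neg at hy2
      refine hcon y ?_ hy
      intro c hc
      exact hy2 c hc
    classical
    set cf : G → ℕ := fun y => if h : y ∈ A then (hcon' y h).choose else 1 with hcf
    have hcf1 : ∀ y ∈ A, 0 < cf y ∧ ¬∃ w, (cf y) • w = y := by
      intro y hy
      rw [hcf]
      simp only [dif_pos hy]
      exact (hcon' y hy).choose_spec
    set M := ∏ y ∈ hAfin.toFinset, cf y with hM
    have hMpos : 0 < M := by
      refine Finset.prod_pos ?_
      intro y hy
      exact (hcf1 y (hAfin.mem_toFinset.mp hy)).1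
    obtain ⟨w, hw⟩ := hz (n * M) (by positivity)
    set y' := M • w with hy'
    have hy'A : y' ∈ A := by
      show n • (M • w) = z
      rw [← mul_smul]; exact hw
    obtain ⟨c', hc'⟩ := Finset.dvd_prod_of_mem cf (hAfin.mem_toFinset.mpr hy'A)
    refine (hcf1 y' hy'A).2 ⟨c' • w, ?_⟩
    rw [← mul_smul, ← hc']
  have : D = ⊥ := hred D hdivD
  have hxD : x ∈ D := hx
  rw [this] at hxD
  exact hxD

/-- combine divisibility by two coprime numbers -/
lemma div_combine {a b : ℕ} (h : Nat.Coprime a b) {x : G}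
    (ha : ∃ u, a • u = x) (hb : ∃ v, b • v = x) : ∃ w, (a * b) • w = x := by
  obtain ⟨u, hu⟩ := ha
  obtain ⟨v, hv⟩ := hb
  obtain ⟨α, β, hαβ⟩ := Nat.isCoprime_iff_coprime.mpr h
  have hbv : (b:ℤ) • v = x := by rw [natCast_zsmul, hv]
  have hau : (a:ℤ) • u = x := by rw [natCast_zsmul, hu]
  have key : ((a * b : ℕ) : ℤ) • (α • v + β • u) = x := by
    calc ((a * b : ℕ) : ℤ) • (α • v + β • u)
        = ((a:ℤ) * b) • (α • v) + ((a:ℤ) * b) • (β • u) := by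
          rw [Nat.cast_mul, smul_add]
    _ = α • ((a:ℤ) • ((b:ℤ) • v)) + β • ((b:ℤ) • ((a:ℤ) • u)) := by
          simp only [smul_smul]; ring_nf
    _ = ((α * a) + (β * b)) • x := by rw [hbv, hau, add_smul, smul_smul, smul_smul]
    _ = x := by rw [hαβ, one_zsmul]
  refine ⟨α • v + β • u, ?_⟩
  rw [← natCast_zsmul]
  exact key

/-- divisibility by all prime powers gives divisibility by every positive integer -/
lemma div_of_prime_pow {x : G}
    (h : ∀ p : ℕ, p.Prime → ∀ k : ℕ, ∃ y, p ^ k • y = x) :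
    ∀ n : ℕ, 0 < n → ∃ y, n • y = x := by
  intro n
  induction n using Nat.strong_induction_on with
  | _ n ih =>
    intro hn
    rcases eq_or_ne n 1 with rfl | hne
    · exact ⟨x, one_smul _ x⟩
    · set p := n.minFac with hp
      have hpp : p.Prime := Nat.minFac_prime hne
      set a := p ^ n.factorization p with ha
      set m := n / a with hm
      have ham : a * m = n := Nat.ordProj_mul_ordCompl_eq_self n p
      have hppos : 0 < n.factorization p :=
        Nat.Prime.factorization_pos_of_dvd hpp (by omega) (Nat.minFac_dvd n)
      have hagt : 1 < a := by
        calc 1 < p := hpp.one_lt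
        _ = p ^ 1 := (pow_one p).symm
        _ ≤ a := Nat.pow_le_pow_right hpp.pos hppos
      have hmpos : 0 < m := by
        rcases Nat.eq_zero_or_pos m with hh | hh
        · rw [hh, mul_zero] at ham; omega
        · exact hh
      have hmlt : m < n := by nlinarith [ham]
      have hcop : Nat.Coprime a m := (Nat.coprime_ordCompl hpp (show n ≠ 0 by omega)).pow_left _
      rw [← ham]
      exact div_combine hcop (h p hpp _) (ih m hmlt hmpos)

end main4

section main5
variable {G : Type*} [AddCommGroup G]

/-- restriction of an endomorphism of `G` to the torsion subgroup -/
def restrictT (φ : AddMonoid.End G) : AddMonoid.End ↥(AddCommGroup.torsion G) where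
  toFun t := ⟨φ (t : G), (AddCommGroup.mem_torsion _).mpr
    ((φ : G →+ G).isOfFinAddOrder t.2)⟩
  map_zero' := by ext; show φ 0 = 0; rw [map_zero]
  map_add' t s := by ext; show φ ((t : G) + s) = φ t + φ s; rw [map_add]

lemma restrictT_coe (φ : AddMonoid.End G) (t : ↥(AddCommGroup.torsion G)) :
    ((restrictT φ t : ↥(AddCommGroup.torsion G)) : G) = φ (t : G) := rfl

lemma restrictT_pow (φ : AddMonoid.End G) (m : ℕ) (t : ↥(AddCommGroup.torsion G)) :
    (((restrictT φ ^ m) t : ↥(AddCommGroup.torsion G)) : G) = (φ ^ m) (t : G) := by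
  induction m with
  | zero => simp only [pow_zero]; rfl
  | succ m ih =>
    rw [pow_end_apply' _ m t, pow_end_apply' _ m (t : G), restrictT_coe, ih]

lemma Tp_exponent
    (hfin : ∀ p : ℕ, p.Prime → {x : G | ∃ k : ℕ, p ^ k • x = 0}.Finite)
    (hp : p.Prime) : ∃ e : ℕ, ∀ z ∈ Tp G p, p ^ e • z = 0 := by
  classical
  set K : G → ℕ := fun z => if h : z ∈ Tp G p then h.choose else 0 with hK
  have hKspec : ∀ z (h : z ∈ Tp G p), p ^ (K z) • z = 0 := by
    intro z h
    rw [hK]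
    simp only [dif_pos h]
    exact h.choose_spec
  refine ⟨(hfin p hp).toFinset.sup K, ?_⟩
  intro z hz
  have hmem : z ∈ (hfin p hp).toFinset := (Set.Finite.mem_toFinset _).mpr hz
  exact pow_smul_mono (hKspec z hz) _ (Finset.le_sup hmem)

lemma tp_hom_closed (hp : p.Prime) (f : G →+ G) {x : G} (hx : x ∈ Tp G p) : f x ∈ Tp G p := by
  obtain ⟨k, hk⟩ := hx
  exact ⟨k, by rw [← map_nsmul, hk, map_zero]⟩

lemma key_div
    (hdiv : ∀ n : ℕ, 0 < n → ∀ q : G ⧸ AddCommGroup.torsion G, ∃ r, n • r = q)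
    (hfin : ∀ p : ℕ, p.Prime → {x : G | ∃ k : ℕ, p ^ k • x = 0}.Finite)
    {N : ℕ}
    (hN : ∀ ψ : AddMonoid.End ↥(AddCommGroup.torsion G), ∀ t,
      (ψ ^ (N + 1)) t = 0 → (ψ ^ N) t = 0)
    (φ : AddMonoid.End G) {c d : G} (hd1 : φ d = 0) (hd2 : (φ ^ (N + 1)) c = d)
    {p : ℕ} (hp : p.Prime) (k : ℕ) : ∃ g, p ^ k • g = d := by
  obtain ⟨e, he⟩ := Tp_exponent hfin hp
  set m := k + e with hm
  have hpm : 0 < p ^ m := pow_pos hp.pos m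
  set M : G →+ G ⧸ AddCommGroup.torsion G :=
    (QuotientAddGroup.mk' (AddCommGroup.torsion G)) with hM
  obtain ⟨r, hr⟩ := hdiv (p ^ m) hpm (M c)
  obtain ⟨z, hz⟩ := QuotientAddGroup.mk'_surjective (AddCommGroup.torsion G) r
  have ht : c - p ^ m • z ∈ AddCommGroup.torsion G := by
    have : M (c - p ^ m • z) = 0 := by
      rw [map_sub, map_nsmul, hz, hr, sub_self]
    exact (QuotientAddGroup.eq_zero_iff _).mp this
  have ht2 : IsOfFinAddOrder (c - p ^ m • z) := ht
  set t := c - p ^ m • z with htdef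
  set u := pPart p t with hu
  have humem : u ∈ Tp G p := pPart_mem hp ht2
  have hvcop : Cop p (t - u) := pPart_cop hp ht2
  -- the coprime part is divisible by p ^ m
  obtain ⟨m', hcm, hmv⟩ := hvcop
  obtain ⟨α, β, hαβ⟩ := Nat.isCoprime_iff_coprime.mpr (hcm.pow_right m)
  set v := t - u with hv
  have hvdiv : p ^ m • (β • v) = v := by
    calc p ^ m • (β • v) = ((p ^ m : ℕ) : ℤ) • (β • v) := by rw [natCast_zsmul]
    _ = ((p ^ m : ℕ) * β) • v := by rw [smul_smul]
    _ = (1 - α * m') • v := by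
        rw [show ((p ^ m : ℕ) : ℤ) * β = 1 - α * m' by linarith [hαβ]]
    _ = v - α • ((m' : ℕ) • v) := by
        rw [sub_smul, one_zsmul, mul_smul, natCast_zsmul]
    _ = v := by rw [hmv, smul_zero, sub_zero]
  -- decomposition of c
  have hdecomp : c = u + p ^ m • (z + β • v) := by
    rw [smul_add, hvdiv]
    have : c = t + p ^ m • z := by rw [htdef]; abel
    rw [this, hv]; abel
  set g₀ := z + β • v with hg₀
  have hd3 : d = (φ ^ (N + 1)) u + p ^ m • ((φ ^ (N + 1)) g₀) := by
    rw [← hd2, hdecomp, map_add, map_nsmul]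
  -- φ^(N+2) u = 0
  have hc1 : φ ((φ ^ (N + 1)) u) + p ^ m • (φ ((φ ^ (N + 1)) g₀)) = 0 := by
    have := congrArg (φ : G → G) hd3
    rw [hd1, map_add, map_nsmul] at this
    exact this.symm
  set cEl := φ ((φ ^ (N + 1)) u) with hcEl
  have hcElTp : cEl ∈ Tp G p := by
    refine tp_hom_closed hp (φ : G →+ G) ?_
    exact tp_hom_closed hp ((φ ^ (N + 1) : AddMonoid.End G) : G →+ G) humem
  have hcEl2 : cEl = p ^ m • (- φ ((φ ^ (N + 1)) g₀)) := by
    rw [smul_neg]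
    exact eq_neg_of_add_eq_zero_left hc1
  set h' := - φ ((φ ^ (N + 1)) g₀) with hh'
  have hh'Tp : h' ∈ Tp G p := by
    refine ⟨m + e, ?_⟩
    have h1 : p ^ (m + e) • h' = p ^ e • (p ^ m • h') := by
      rw [pow_add, mul_comm, mul_smul]
    rw [h1, ← hcEl2, he cEl hcElTp]
  have hcEl0 : cEl = 0 := by
    rw [hcEl2, show m = k + e from hm, pow_add, mul_smul, he h' hh'Tp, smul_zero]
  set uT : ↥(AddCommGroup.torsion G) := ⟨u, Tp_le_torsion hp humem⟩ with huT
  set ψ := restrictT φ with hψ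
  have hψ2 : (ψ ^ (N + 2)) uT = 0 := by
    have hcoe : (((ψ ^ (N + 2)) uT : ↥(AddCommGroup.torsion G)) : G) = 0 := by
      rw [hψ, restrictT_pow]
      show (φ ^ (N + 2)) u = 0
      rw [pow_end_apply' φ (N + 1) u]
      exact hcEl0
    exact Subtype.ext hcoe
  have hψ1 : (ψ ^ (N + 1)) uT = 0 := by
    have h3 : (ψ ^ (N + 1)) (ψ uT) = 0 := by
      rw [← pow_end_apply ψ (N + 1) uT]
      exact hψ2
    have h4 := hN ψ (ψ uT) h3
    rw [← pow_end_apply ψ N uT] at h4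
    exact h4
  have hu0 : (φ ^ (N + 1)) u = 0 := by
    calc (φ ^ (N + 1)) u = (((ψ ^ (N + 1)) uT : ↥(AddCommGroup.torsion G)) : G) :=
          (restrictT_pow φ (N + 1) uT).symm
    _ = 0 := by rw [hψ1]; rfl
  refine ⟨p ^ e • ((φ ^ (N + 1)) g₀), ?_⟩
  rw [← mul_smul, ← pow_add, hd3, hu0, zero_add, show m = k + e from hm]

end main5

end SP14

theorem stmt14 {G : Type*} [AddCommGroup G]
    (hred : IsReducedGroup G)
    (hdiv : ∀ n : ℕ, 0 < n → ∀ q : G ⧸ AddCommGroup.torsion G, ∃ r, n • r = q)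
    (hfin : ∀ p : ℕ, p.Prime → {x : G | ∃ k : ℕ, p ^ k • x = 0}.Finite)
    (hT : StronglyHopfian (AddCommGroup.torsion G)) :
    UniformlyStronglyHopfian G := by
  classical
  have hT' : SP14.SHopf ↥(AddCommGroup.torsion G) := hT
  obtain ⟨N, hN⟩ := SP14.uniform_torsion_bound hfin hT'
  refine ⟨N + 1, fun φ => ?_⟩
  intro x hx y hy hxy
  obtain ⟨a, ha⟩ := hx
  obtain ⟨b, hb⟩ := hy
  set d := x - y with hd
  have hd1 : φ d = 0 := by
    rw [hd, map_sub, hxy, sub_self]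
  have hd2 : (φ ^ (N + 1)) (a - b) = d := by
    rw [map_sub, ha, hb]
  have hdall : ∀ n : ℕ, 0 < n → ∃ g, n • g = d :=
    SP14.div_of_prime_pow (fun p hp k => SP14.key_div hdiv hfin hN φ hd1 hd2 hp k)
  have hd0 : d = 0 := SP14.ulm_zero hred hfin d hdall
  rw [hd] at hd0
  exact sub_eq_zero.mp hd0
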